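/- Let M be a finitely generated module over a commutative Noetherian ring whose associated primes are all minimal over Ann(M) (no embedded primes), and suppose that for each associated prime p the localization M_p has length exactly 1 over R_p. Then Ann(M) is a radical ideal, i.e., equals the intersection of the associated primes of M. -/

import Mathlib

/-- A binary module without embedded primes is semi-prime: its annihilator is the
intersection of its associated primes, in particular a radical ideal. -/
theorem stmt_11 {R M : Type*} [CommRing R] [IsNoetherianRing R]
    [AddCommGroup M] [Module R M] [Module.Finite R M]
    (hmin : ∀ p ∈ associatedPrimes R M, p ∈ (Module.annihilator R M).minimalPrimes)
    (hbin : ∀ (p : Ideal R) (hp : p.IsPrime), p ∈ associatedPrimes R M →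
      IsSimpleModule (Localization.AtPrime p) (LocalizedModule p.primeCompl M)) :
    Module.annihilator R M = sInf (associatedPrimes R M) ∧
      (Module.annihilator R M).IsRadical := by
  have hle : Module.annihilator R M ≤ sInf (associatedPrimes R M) := by
    refine le_sInf fun p hp => ?_
    obtain ⟨hprime, x, rfl⟩ := hp
    intro r hr
    apply Ideal.le_radical
    rw [Submodule.mem_colon_singleton, Submodule.mem_bot]
    exact Module.mem_annihilator.mp hr x
  have hge : sInf (associatedPrimes R M) ≤ Module.annihilator R M := by
    intro r hr
    rw [Module.mem_annihilator]
    intro x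
    by_contra hx
    obtain ⟨P, hP, hPle⟩ :=
      exists_le_isAssociatedPrime_of_isNoetherianRing R (r • x) hx
    have hrP : r ∈ P := (Ideal.mem_sInf.mp hr) hP
    haveI : P.IsPrime := hP.isPrime
    haveI hsimple := hbin P hP.isPrime hP
    have hmax := IsSimpleModule.annihilator_isMaximal
      (R := Localization.AtPrime P) (M := LocalizedModule P.primeCompl M)
    have heq : Module.annihilator (Localization.AtPrime P) (LocalizedModule P.primeCompl M)
        = IsLocalRing.maximalIdeal (Localization.AtPrime P) :=
      IsLocalRing.eq_maximalIdeal hmax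
    have hmem : (algebraMap R (Localization.AtPrime P)) r ∈
        Module.annihilator (Localization.AtPrime P) (LocalizedModule P.primeCompl M) := by
      rw [heq, ← Localization.AtPrime.comap_maximalIdeal (I := P)] at *
      exact hrP
    have h0 : (algebraMap R (Localization.AtPrime P)) r •
        (LocalizedModule.mk x 1 : LocalizedModule P.primeCompl M) = 0 :=
      Module.mem_annihilator.mp hmem _
    rw [← Localization.mk_one_eq_algebraMap, LocalizedModule.mk_smul_mk] at h0
    rw [show (0 : LocalizedModule P.primeCompl M) = LocalizedModule.mk 0 1 from
      (LocalizedModule.zero_mk 1).symm, LocalizedModule.mk_eq] at h0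
    obtain ⟨u, hu⟩ := h0
    simp only [smul_zero, one_smul] at hu
    have : (u : R) • (r • x) = 0 := by
      simpa [Submonoid.smul_def] using hu
    have humem : (u : R) ∈ (Submodule.span R {r • x}).annihilator :=
      Submodule.mem_annihilator_span_singleton _ _ |>.mpr this
    exact u.2 (hPle (Submodule.mem_colon_singleton.mpr ((Submodule.mem_bot R).mpr this)))
  refine ⟨le_antisymm hle hge, ?_⟩
  rw [le_antisymm hle hge]
  exact fun x hx => Ideal.mem_sInf.mpr fun {p} hp =>
    hp.isPrime.isRadical (Ideal.radical_mono (sInf_le hp) hx)
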